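/- Let δ, β be reals, α ≠ 0, ρ = sqrt(β² - 4α) with β² - 4α > 0. If y solves y'' + (β e^{-δz} y - 2δ) y' + (e^{-δz}/2) y²(α e^{-δz} y - 2βδ) = 0 on an interval, then I(z) = e^{-2ρδz} · (2y' - 2δy + β e^{-δz} y² - (2βδ²/α) e^{δz} - (e^{δz}/(2α))(β-ρ)(α e^{-2δz} y² - 2δ²))^{ρ+β} · (2y' - 2δy + β e^{-δz} y² - (2βδ²/α) e^{δz} - (e^{δz}/(2α))(β+ρ)(α e^{-2δz} y² - 2δ²))^{ρ-β} is constant on any subinterval where both base expressions are positive. -/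

import Mathlib

theorem key2 (a b d r E Ei E2 u v vp : ℝ) (ha : a ≠ 0) (hEi : Ei ≠ 0)
    (hE : E = Ei⁻¹) (hE2 : E2 = E^2) (hr2 : r^2 = b^2 - 4*a)
    (hode : vp = -((b*E*u - 2*d)*v) - E/2*u^2*(a*E*u - 2*b*d)) :
    (r+b) * (2*vp - 2*d*v + b*(E*(2*u*v) - d*E*u^2) - 2*b*d^2/a*(d*Ei) - (b - r)/(2*a)*(d*Ei*(a*E2*u^2 - 2*d^2) + Ei*(a*(E2*(2*u*v) - 2*d*E2*u^2)))) * (2*v - 2*d*u + b*E*u^2 - 2*b*d^2/a*Ei - Ei/(2*a)*(b + r)*(a*E2*u^2 - 2*d^2))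
      + (r-b) * (2*vp - 2*d*v + b*(E*(2*u*v) - d*E*u^2) - 2*b*d^2/a*(d*Ei) - (b + r)/(2*a)*(d*Ei*(a*E2*u^2 - 2*d^2) + Ei*(a*(E2*(2*u*v) - 2*d*E2*u^2)))) * (2*v - 2*d*u + b*E*u^2 - 2*b*d^2/a*Ei - Ei/(2*a)*(b - r)*(a*E2*u^2 - 2*d^2))
    = 2*r*d*((2*v - 2*d*u + b*E*u^2 - 2*b*d^2/a*Ei - Ei/(2*a)*(b - r)*(a*E2*u^2 - 2*d^2)) * (2*v - 2*d*u + b*E*u^2 - 2*b*d^2/a*Ei - Ei/(2*a)*(b + r)*(a*E2*u^2 - 2*d^2))) := by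
  have hK : (2*vp - 2*d*v + b*(E*(2*u*v) - d*E*u^2) - 2*b*d^2/a*(d*Ei))*((2*v - 2*d*u + b*E*u^2 - 2*b*d^2/a*Ei) - 2*b*(Ei/(2*a)*(a*E2*u^2 - 2*d^2))) + 4*a*((1/(2*a)*(d*Ei*(a*E2*u^2 - 2*d^2) + Ei*(a*(E2*(2*u*v) - 2*d*E2*u^2))))*(Ei/(2*a)*(a*E2*u^2 - 2*d^2)))
      = d*((2*v - 2*d*u + b*E*u^2 - 2*b*d^2/a*Ei)*((2*v - 2*d*u + b*E*u^2 - 2*b*d^2/a*Ei) - 2*b*(Ei/(2*a)*(a*E2*u^2 - 2*d^2))) + 4*a*(Ei/(2*a)*(a*E2*u^2 - 2*d^2))^2) := by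
    rw [hode, hE2, hE]
    field_simp
    ring
  linear_combination (-(2*r)*((1/(2*a)*(d*Ei*(a*E2*u^2 - 2*d^2) + Ei*(a*(E2*(2*u*v) - 2*d*E2*u^2))))*(Ei/(2*a)*(a*E2*u^2 - 2*d^2)) - d*(Ei/(2*a)*(a*E2*u^2 - 2*d^2))^2)) * hr2 + (2*r) * hK


theorem split_lemma (p q s A B C D : ℝ) (hB : B ≠ 0) (hD : D ≠ 0) :
    p * (A / B) + q * (C / D) - s = (p * A * D + q * C * B - s * (B * D)) / (B * D) := by
  field_simp

set_option maxHeartbeats 1000000 in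
theorem stmt_11 (α β δ : ℝ) (hα : α ≠ 0) (hdisc : β ^ 2 - 4 * α > 0)
    (ρ : ℝ) (hρ : ρ = Real.sqrt (β ^ 2 - 4 * α))
    (y : ℝ → ℝ) (hy : Differentiable ℝ y) (hy' : Differentiable ℝ (deriv y))
    (a b : ℝ)
    (heq : ∀ z ∈ Set.Ioo a b,
      deriv (deriv y) z + (β * Real.exp (-(δ * z)) * y z - 2 * δ) * deriv y z
        + (Real.exp (-(δ * z)) / 2) * y z ^ 2 *
            (α * Real.exp (-(δ * z)) * y z - 2 * β * δ) = 0)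
    (c d : ℝ) (hsub : Set.Ioo c d ⊆ Set.Ioo a b)
    (hpos : ∀ z ∈ Set.Ioo c d,
      0 < 2 * deriv y z - 2 * δ * y z + β * Real.exp (-(δ * z)) * y z ^ 2
            - (2 * β * δ ^ 2 / α) * Real.exp (δ * z)
            - (Real.exp (δ * z) / (2 * α)) * (β - ρ) *
                (α * Real.exp (-(2 * δ * z)) * y z ^ 2 - 2 * δ ^ 2) ∧
      0 < 2 * deriv y z - 2 * δ * y z + β * Real.exp (-(δ * z)) * y z ^ 2
            - (2 * β * δ ^ 2 / α) * Real.exp (δ * z)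
            - (Real.exp (δ * z) / (2 * α)) * (β + ρ) *
                (α * Real.exp (-(2 * δ * z)) * y z ^ 2 - 2 * δ ^ 2)) :
    ∀ x ∈ Set.Ioo c d, ∀ x' ∈ Set.Ioo c d,
      Real.exp (-(2 * ρ * δ * x)) *
        (2 * deriv y x - 2 * δ * y x + β * Real.exp (-(δ * x)) * y x ^ 2
            - (2 * β * δ ^ 2 / α) * Real.exp (δ * x)
            - (Real.exp (δ * x) / (2 * α)) * (β - ρ) *
                (α * Real.exp (-(2 * δ * x)) * y x ^ 2 - 2 * δ ^ 2)) ^ (ρ + β) *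
        (2 * deriv y x - 2 * δ * y x + β * Real.exp (-(δ * x)) * y x ^ 2
            - (2 * β * δ ^ 2 / α) * Real.exp (δ * x)
            - (Real.exp (δ * x) / (2 * α)) * (β + ρ) *
                (α * Real.exp (-(2 * δ * x)) * y x ^ 2 - 2 * δ ^ 2)) ^ (ρ - β)
      = Real.exp (-(2 * ρ * δ * x')) *
        (2 * deriv y x' - 2 * δ * y x' + β * Real.exp (-(δ * x')) * y x' ^ 2
            - (2 * β * δ ^ 2 / α) * Real.exp (δ * x')
            - (Real.exp (δ * x') / (2 * α)) * (β - ρ) *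
                (α * Real.exp (-(2 * δ * x')) * y x' ^ 2 - 2 * δ ^ 2)) ^ (ρ + β) *
        (2 * deriv y x' - 2 * δ * y x' + β * Real.exp (-(δ * x')) * y x' ^ 2
            - (2 * β * δ ^ 2 / α) * Real.exp (δ * x')
            - (Real.exp (δ * x') / (2 * α)) * (β + ρ) *
                (α * Real.exp (-(2 * δ * x')) * y x' ^ 2 - 2 * δ ^ 2)) ^ (ρ - β) := by
  have hρ2 : ρ ^ 2 = β ^ 2 - 4 * α := by rw [hρ]; exact Real.sq_sqrt hdisc.le
  -- derivatives of the base functions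
  have hd1 : ∀ w : ℝ, HasDerivAt (fun z => 2 * deriv y z - 2 * δ * y z + β * Real.exp (-(δ * z)) * y z ^ 2 - 2 * β * δ ^ 2 / α * Real.exp (δ * z) - Real.exp (δ * z) / (2 * α) * (β - ρ) * (α * Real.exp (-(2 * δ * z)) * y z ^ 2 - 2 * δ ^ 2)) (2*(deriv (deriv y) w) - 2*δ*(deriv y w) + β*(Real.exp (-(δ * w))*(2*(y w)*(deriv y w)) - δ*Real.exp (-(δ * w))*(y w)^2) - 2*β*δ^2/α*(δ*Real.exp (δ * w)) - (β - ρ)/(2*α)*(δ*Real.exp (δ * w)*(α*Real.exp (-(2 * δ * w))*(y w)^2 - 2*δ^2) + Real.exp (δ * w)*(α*(Real.exp (-(2 * δ * w))*(2*(y w)*(deriv y w)) - 2*δ*Real.exp (-(2 * δ * w))*(y w)^2)))) w := by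
    intro w
    have hv : HasDerivAt y (deriv y w) w := (hy w).hasDerivAt
    have hv' : HasDerivAt (deriv y) (deriv (deriv y) w) w := (hy' w).hasDerivAt
    have hE : HasDerivAt (fun z => Real.exp (-(δ * z))) (Real.exp (-(δ * w)) * -(δ * 1)) w :=
      (((hasDerivAt_id w).const_mul δ).neg).exp
    have hE2 : HasDerivAt (fun z => Real.exp (-(2 * δ * z))) (Real.exp (-(2 * δ * w)) * -(2 * δ * 1)) w :=
      (((hasDerivAt_id w).const_mul (2 * δ)).neg).exp
    have hEi : HasDerivAt (fun z => Real.exp (δ * z)) (Real.exp (δ * w) * (δ * 1)) w :=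
      ((hasDerivAt_id w).const_mul δ).exp
    have t1 := hv'.const_mul 2
    have t2 := hv.const_mul (2 * δ)
    have t3 := (hE.const_mul β).mul (hv.pow 2)
    have t4 := hEi.const_mul (2 * β * δ ^ 2 / α)
    have hG := ((hE2.const_mul α).mul (hv.pow 2)).sub_const (2 * δ ^ 2)
    have t5 := ((hEi.div_const (2 * α)).mul_const (β - ρ)).mul hG
    have h := (((t1.sub t2).add t3).sub t4).sub t5
    convert h using 1
    rfl
    rfl
    rfl
    push_cast
    simp only [Pi.mul_apply, Pi.pow_apply, Nat.cast_ofNat]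
    ring
  have hd2 : ∀ w : ℝ, HasDerivAt (fun z => 2 * deriv y z - 2 * δ * y z + β * Real.exp (-(δ * z)) * y z ^ 2 - 2 * β * δ ^ 2 / α * Real.exp (δ * z) - Real.exp (δ * z) / (2 * α) * (β + ρ) * (α * Real.exp (-(2 * δ * z)) * y z ^ 2 - 2 * δ ^ 2)) (2*(deriv (deriv y) w) - 2*δ*(deriv y w) + β*(Real.exp (-(δ * w))*(2*(y w)*(deriv y w)) - δ*Real.exp (-(δ * w))*(y w)^2) - 2*β*δ^2/α*(δ*Real.exp (δ * w)) - (β + ρ)/(2*α)*(δ*Real.exp (δ * w)*(α*Real.exp (-(2 * δ * w))*(y w)^2 - 2*δ^2) + Real.exp (δ * w)*(α*(Real.exp (-(2 * δ * w))*(2*(y w)*(deriv y w)) - 2*δ*Real.exp (-(2 * δ * w))*(y w)^2)))) w := by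
    intro w
    have hv : HasDerivAt y (deriv y w) w := (hy w).hasDerivAt
    have hv' : HasDerivAt (deriv y) (deriv (deriv y) w) w := (hy' w).hasDerivAt
    have hE : HasDerivAt (fun z => Real.exp (-(δ * z))) (Real.exp (-(δ * w)) * -(δ * 1)) w :=
      (((hasDerivAt_id w).const_mul δ).neg).exp
    have hE2 : HasDerivAt (fun z => Real.exp (-(2 * δ * z))) (Real.exp (-(2 * δ * w)) * -(2 * δ * 1)) w :=
      (((hasDerivAt_id w).const_mul (2 * δ)).neg).exp
    have hEi : HasDerivAt (fun z => Real.exp (δ * z)) (Real.exp (δ * w) * (δ * 1)) w :=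
      ((hasDerivAt_id w).const_mul δ).exp
    have t1 := hv'.const_mul 2
    have t2 := hv.const_mul (2 * δ)
    have t3 := (hE.const_mul β).mul (hv.pow 2)
    have t4 := hEi.const_mul (2 * β * δ ^ 2 / α)
    have hG := ((hE2.const_mul α).mul (hv.pow 2)).sub_const (2 * δ ^ 2)
    have t5 := ((hEi.div_const (2 * α)).mul_const (β + ρ)).mul hG
    have h := (((t1.sub t2).add t3).sub t4).sub t5
    convert h using 1
    rfl
    rfl
    rfl
    push_cast
    simp only [Pi.mul_apply, Pi.pow_apply, Nat.cast_ofNat]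
    ring
  -- the log first-integral has zero derivative on Ioo c d
  have hL0 : ∀ w ∈ Set.Ioo c d, HasDerivAt (fun z => (ρ + β) * Real.log (2 * deriv y z - 2 * δ * y z + β * Real.exp (-(δ * z)) * y z ^ 2 - 2 * β * δ ^ 2 / α * Real.exp (δ * z) - Real.exp (δ * z) / (2 * α) * (β - ρ) * (α * Real.exp (-(2 * δ * z)) * y z ^ 2 - 2 * δ ^ 2)) + (ρ - β) * Real.log (2 * deriv y z - 2 * δ * y z + β * Real.exp (-(δ * z)) * y z ^ 2 - 2 * β * δ ^ 2 / α * Real.exp (δ * z) - Real.exp (δ * z) / (2 * α) * (β + ρ) * (α * Real.exp (-(2 * δ * z)) * y z ^ 2 - 2 * δ ^ 2)) - 2 * ρ * δ * z) 0 w := by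
    intro w hw
    have h1pos := (hpos w hw).1
    have h2pos := (hpos w hw).2
    have hL : HasDerivAt (fun z => (ρ + β) * Real.log (2 * deriv y z - 2 * δ * y z + β * Real.exp (-(δ * z)) * y z ^ 2 - 2 * β * δ ^ 2 / α * Real.exp (δ * z) - Real.exp (δ * z) / (2 * α) * (β - ρ) * (α * Real.exp (-(2 * δ * z)) * y z ^ 2 - 2 * δ ^ 2)) + (ρ - β) * Real.log (2 * deriv y z - 2 * δ * y z + β * Real.exp (-(δ * z)) * y z ^ 2 - 2 * β * δ ^ 2 / α * Real.exp (δ * z) - Real.exp (δ * z) / (2 * α) * (β + ρ) * (α * Real.exp (-(2 * δ * z)) * y z ^ 2 - 2 * δ ^ 2)) - 2 * ρ * δ * z)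
        ((ρ + β) * ((2*(deriv (deriv y) w) - 2*δ*(deriv y w) + β*(Real.exp (-(δ * w))*(2*(y w)*(deriv y w)) - δ*Real.exp (-(δ * w))*(y w)^2) - 2*β*δ^2/α*(δ*Real.exp (δ * w)) - (β - ρ)/(2*α)*(δ*Real.exp (δ * w)*(α*Real.exp (-(2 * δ * w))*(y w)^2 - 2*δ^2) + Real.exp (δ * w)*(α*(Real.exp (-(2 * δ * w))*(2*(y w)*(deriv y w)) - 2*δ*Real.exp (-(2 * δ * w))*(y w)^2)))) / (2 * deriv y w - 2 * δ * y w + β * Real.exp (-(δ * w)) * y w ^ 2 - 2 * β * δ ^ 2 / α * Real.exp (δ * w) - Real.exp (δ * w) / (2 * α) * (β - ρ) * (α * Real.exp (-(2 * δ * w)) * y w ^ 2 - 2 * δ ^ 2)))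
          + (ρ - β) * ((2*(deriv (deriv y) w) - 2*δ*(deriv y w) + β*(Real.exp (-(δ * w))*(2*(y w)*(deriv y w)) - δ*Real.exp (-(δ * w))*(y w)^2) - 2*β*δ^2/α*(δ*Real.exp (δ * w)) - (β + ρ)/(2*α)*(δ*Real.exp (δ * w)*(α*Real.exp (-(2 * δ * w))*(y w)^2 - 2*δ^2) + Real.exp (δ * w)*(α*(Real.exp (-(2 * δ * w))*(2*(y w)*(deriv y w)) - 2*δ*Real.exp (-(2 * δ * w))*(y w)^2)))) / (2 * deriv y w - 2 * δ * y w + β * Real.exp (-(δ * w)) * y w ^ 2 - 2 * β * δ ^ 2 / α * Real.exp (δ * w) - Real.exp (δ * w) / (2 * α) * (β + ρ) * (α * Real.exp (-(2 * δ * w)) * y w ^ 2 - 2 * δ ^ 2)))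
          - 2 * ρ * δ * 1) w := by
      exact ((((hd1 w).log h1pos.ne').const_mul (ρ + β)).add
        (((hd2 w).log h2pos.ne').const_mul (ρ - β))).sub
        ((hasDerivAt_id w).const_mul (2 * ρ * δ))
    have hode : deriv (deriv y) w = -((β * Real.exp (-(δ * w)) * y w - 2 * δ) * deriv y w)
        - Real.exp (-(δ * w)) / 2 * (y w) ^ 2 * (α * Real.exp (-(δ * w)) * y w - 2 * β * δ) := by
      have h := heq w (hsub hw)
      linear_combination h
    have hk := key2 α β δ ρ (Real.exp (-(δ * w))) (Real.exp (δ * w)) (Real.exp (-(2 * δ * w)))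
      (y w) (deriv y w) (deriv (deriv y) w) hα (Real.exp_ne_zero _)
      (by rw [Real.exp_neg]) (by rw [sq, ← Real.exp_add]; congr 1; ring) hρ2 hode
    have hzero : (ρ + β) * ((2*(deriv (deriv y) w) - 2*δ*(deriv y w) + β*(Real.exp (-(δ * w))*(2*(y w)*(deriv y w)) - δ*Real.exp (-(δ * w))*(y w)^2) - 2*β*δ^2/α*(δ*Real.exp (δ * w)) - (β - ρ)/(2*α)*(δ*Real.exp (δ * w)*(α*Real.exp (-(2 * δ * w))*(y w)^2 - 2*δ^2) + Real.exp (δ * w)*(α*(Real.exp (-(2 * δ * w))*(2*(y w)*(deriv y w)) - 2*δ*Real.exp (-(2 * δ * w))*(y w)^2)))) / (2 * deriv y w - 2 * δ * y w + β * Real.exp (-(δ * w)) * y w ^ 2 - 2 * β * δ ^ 2 / α * Real.exp (δ * w) - Real.exp (δ * w) / (2 * α) * (β - ρ) * (α * Real.exp (-(2 * δ * w)) * y w ^ 2 - 2 * δ ^ 2)))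
          + (ρ - β) * ((2*(deriv (deriv y) w) - 2*δ*(deriv y w) + β*(Real.exp (-(δ * w))*(2*(y w)*(deriv y w)) - δ*Real.exp (-(δ * w))*(y w)^2) - 2*β*δ^2/α*(δ*Real.exp (δ * w)) - (β + ρ)/(2*α)*(δ*Real.exp (δ * w)*(α*Real.exp (-(2 * δ * w))*(y w)^2 - 2*δ^2) + Real.exp (δ * w)*(α*(Real.exp (-(2 * δ * w))*(2*(y w)*(deriv y w)) - 2*δ*Real.exp (-(2 * δ * w))*(y w)^2)))) / (2 * deriv y w - 2 * δ * y w + β * Real.exp (-(δ * w)) * y w ^ 2 - 2 * β * δ ^ 2 / α * Real.exp (δ * w) - Real.exp (δ * w) / (2 * α) * (β + ρ) * (α * Real.exp (-(2 * δ * w)) * y w ^ 2 - 2 * δ ^ 2)))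
          - 2 * ρ * δ * 1 = 0 := by
      have ne1 := h1pos.ne'
      have ne2 := h2pos.ne'
      have hN : (ρ + β) * (2*(deriv (deriv y) w) - 2*δ*(deriv y w) + β*(Real.exp (-(δ * w))*(2*(y w)*(deriv y w)) - δ*Real.exp (-(δ * w))*(y w)^2) - 2*β*δ^2/α*(δ*Real.exp (δ * w)) - (β - ρ)/(2*α)*(δ*Real.exp (δ * w)*(α*Real.exp (-(2 * δ * w))*(y w)^2 - 2*δ^2) + Real.exp (δ * w)*(α*(Real.exp (-(2 * δ * w))*(2*(y w)*(deriv y w)) - 2*δ*Real.exp (-(2 * δ * w))*(y w)^2)))) * (2 * deriv y w - 2 * δ * y w + β * Real.exp (-(δ * w)) * y w ^ 2 - 2 * β * δ ^ 2 / α * Real.exp (δ * w) - Real.exp (δ * w) / (2 * α) * (β + ρ) * (α * Real.exp (-(2 * δ * w)) * y w ^ 2 - 2 * δ ^ 2)) + (ρ - β) * (2*(deriv (deriv y) w) - 2*δ*(deriv y w) + β*(Real.exp (-(δ * w))*(2*(y w)*(deriv y w)) - δ*Real.exp (-(δ * w))*(y w)^2) - 2*β*δ^2/α*(δ*Real.exp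 (δ * w)) - (β + ρ)/(2*α)*(δ*Real.exp (δ * w)*(α*Real.exp (-(2 * δ * w))*(y w)^2 - 2*δ^2) + Real.exp (δ * w)*(α*(Real.exp (-(2 * δ * w))*(2*(y w)*(deriv y w)) - 2*δ*Real.exp (-(2 * δ * w))*(y w)^2)))) * (2 * deriv y w - 2 * δ * y w + β * Real.exp (-(δ * w)) * y w ^ 2 - 2 * β * δ ^ 2 / α * Real.exp (δ * w) - Real.exp (δ * w) / (2 * α) * (β - ρ) * (α * Real.exp (-(2 * δ * w)) * y w ^ 2 - 2 * δ ^ 2))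
          - 2 * ρ * δ * 1 * ((2 * deriv y w - 2 * δ * y w + β * Real.exp (-(δ * w)) * y w ^ 2 - 2 * β * δ ^ 2 / α * Real.exp (δ * w) - Real.exp (δ * w) / (2 * α) * (β - ρ) * (α * Real.exp (-(2 * δ * w)) * y w ^ 2 - 2 * δ ^ 2)) * (2 * deriv y w - 2 * δ * y w + β * Real.exp (-(δ * w)) * y w ^ 2 - 2 * β * δ ^ 2 / α * Real.exp (δ * w) - Real.exp (δ * w) / (2 * α) * (β + ρ) * (α * Real.exp (-(2 * δ * w)) * y w ^ 2 - 2 * δ ^ 2))) = 0 := by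
        linear_combination hk
      rw [split_lemma (ρ + β) (ρ - β) (2 * ρ * δ * 1)
        (2*(deriv (deriv y) w) - 2*δ*(deriv y w) + β*(Real.exp (-(δ * w))*(2*(y w)*(deriv y w)) - δ*Real.exp (-(δ * w))*(y w)^2) - 2*β*δ^2/α*(δ*Real.exp (δ * w)) - (β - ρ)/(2*α)*(δ*Real.exp (δ * w)*(α*Real.exp (-(2 * δ * w))*(y w)^2 - 2*δ^2) + Real.exp (δ * w)*(α*(Real.exp (-(2 * δ * w))*(2*(y w)*(deriv y w)) - 2*δ*Real.exp (-(2 * δ * w))*(y w)^2)))) (2 * deriv y w - 2 * δ * y w + β * Real.exp (-(δ * w)) * y w ^ 2 - 2 * β * δ ^ 2 / α * Real.exp (δ * w) - Real.exp (δ * w) / (2 * α) * (β - ρ) * (α * Real.exp (-(2 * δ * w)) * y w ^ 2 - 2 * δ ^ 2)) (2*(deriv (deriv y) w) - 2*δ*(deriv y w) + β*(Real.exp (-(δ * w))*(2*(y w)*(deriv y w)) - δ*Real.exp (-(δ * w))*(y w)^2) - 2*β*δ^2/α*(δ*Real.exp (δ * w)) - (β + ρ)/(2*α)*(δ*Real.exp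 (δ * w)*(α*Real.exp (-(2 * δ * w))*(y w)^2 - 2*δ^2) + Real.exp (δ * w)*(α*(Real.exp (-(2 * δ * w))*(2*(y w)*(deriv y w)) - 2*δ*Real.exp (-(2 * δ * w))*(y w)^2)))) (2 * deriv y w - 2 * δ * y w + β * Real.exp (-(δ * w)) * y w ^ 2 - 2 * β * δ ^ 2 / α * Real.exp (δ * w) - Real.exp (δ * w) / (2 * α) * (β + ρ) * (α * Real.exp (-(2 * δ * w)) * y w ^ 2 - 2 * δ ^ 2)) ne1 ne2, hN, zero_div]
    rw [hzero] at hL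
    exact hL
  -- constancy of L on Ioo c d
  have hconst : ∀ p ∈ Set.Ioo c d, ∀ q ∈ Set.Ioo c d, p ≤ q →
      (fun z => (ρ + β) * Real.log (2 * deriv y z - 2 * δ * y z + β * Real.exp (-(δ * z)) * y z ^ 2 - 2 * β * δ ^ 2 / α * Real.exp (δ * z) - Real.exp (δ * z) / (2 * α) * (β - ρ) * (α * Real.exp (-(2 * δ * z)) * y z ^ 2 - 2 * δ ^ 2)) + (ρ - β) * Real.log (2 * deriv y z - 2 * δ * y z + β * Real.exp (-(δ * z)) * y z ^ 2 - 2 * β * δ ^ 2 / α * Real.exp (δ * z) - Real.exp (δ * z) / (2 * α) * (β + ρ) * (α * Real.exp (-(2 * δ * z)) * y z ^ 2 - 2 * δ ^ 2)) - 2 * ρ * δ * z) p = (fun z => (ρ + β) * Real.log (2 * deriv y z - 2 * δ * y z + β * Real.exp (-(δ * z)) * y z ^ 2 - 2 * β * δ ^ 2 / α * Real.exp (δ * z) - Real.exp (δ * z) / (2 * α) * (β - ρ) * (α * Real.exp (-(2 * δ * z)) * y z ^ 2 - 2 * δ ^ 2)) + (ρ - β) * Real.log (2 * deriv y z - 2 *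 δ * y z + β * Real.exp (-(δ * z)) * y z ^ 2 - 2 * β * δ ^ 2 / α * Real.exp (δ * z) - Real.exp (δ * z) / (2 * α) * (β + ρ) * (α * Real.exp (-(2 * δ * z)) * y z ^ 2 - 2 * δ ^ 2)) - 2 * ρ * δ * z) q := by
    intro p hp q hq hpq
    have hsub2 : Set.Icc p q ⊆ Set.Ioo c d := fun t ht =>
      ⟨lt_of_lt_of_le hp.1 ht.1, lt_of_le_of_lt ht.2 hq.2⟩
    have h := constant_of_has_deriv_right_zero
      (f := fun z => (ρ + β) * Real.log (2 * deriv y z - 2 * δ * y z + β * Real.exp (-(δ * z)) * y z ^ 2 - 2 * β * δ ^ 2 / α * Real.exp (δ * z) - Real.exp (δ * z) / (2 * α) * (β - ρ) * (α * Real.exp (-(2 * δ * z)) * y z ^ 2 - 2 * δ ^ 2)) + (ρ - β) * Real.log (2 * deriv y z - 2 * δ * y z + β * Real.exp (-(δ * z)) * y z ^ 2 - 2 * β * δ ^ 2 / α * Real.exp (δ * z) - Real.exp (δ * z) / (2 * α) * (β + ρ) * (α * Real.exp (-(2 * δ * z)) * y z ^ 2 - 2 * δ ^ 2)) - 2 *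 ρ * δ * z) (a := p) (b := q)
      (fun t ht => (hL0 t (hsub2 ht)).continuousAt.continuousWithinAt)
      (fun t ht => (hL0 t (hsub2 (Set.Ico_subset_Icc_self ht))).hasDerivWithinAt)
    exact (h q (Set.right_mem_Icc.2 hpq)).symm
  have hconst' : ∀ p ∈ Set.Ioo c d, ∀ q ∈ Set.Ioo c d,
      (fun z => (ρ + β) * Real.log (2 * deriv y z - 2 * δ * y z + β * Real.exp (-(δ * z)) * y z ^ 2 - 2 * β * δ ^ 2 / α * Real.exp (δ * z) - Real.exp (δ * z) / (2 * α) * (β - ρ) * (α * Real.exp (-(2 * δ * z)) * y z ^ 2 - 2 * δ ^ 2)) + (ρ - β) * Real.log (2 * deriv y z - 2 * δ * y z + β * Real.exp (-(δ * z)) * y z ^ 2 - 2 * β * δ ^ 2 / α * Real.exp (δ * z) - Real.exp (δ * z) / (2 * α) * (β + ρ) * (α * Real.exp (-(2 * δ * z)) * y z ^ 2 - 2 * δ ^ 2)) - 2 * ρ * δ * z) p = (fun z => (ρ + β) * Real.log (2 * deriv y z - 2 * δ * y z + β * Real.exp (-(δ * z)) * y z ^ 2 - 2 * β * δ ^ 2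 / α * Real.exp (δ * z) - Real.exp (δ * z) / (2 * α) * (β - ρ) * (α * Real.exp (-(2 * δ * z)) * y z ^ 2 - 2 * δ ^ 2)) + (ρ - β) * Real.log (2 * deriv y z - 2 * δ * y z + β * Real.exp (-(δ * z)) * y z ^ 2 - 2 * β * δ ^ 2 / α * Real.exp (δ * z) - Real.exp (δ * z) / (2 * α) * (β + ρ) * (α * Real.exp (-(2 * δ * z)) * y z ^ 2 - 2 * δ ^ 2)) - 2 * ρ * δ * z) q := by
    intro p hp q hq
    rcases le_total p q with h | h
    · exact hconst p hp q hq h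
    · exact (hconst q hq p hp h).symm
  -- rewrite the invariant as exp of L
  have hval : ∀ w ∈ Set.Ioo c d,
      Real.exp (-(2 * ρ * δ * w)) * (2 * deriv y w - 2 * δ * y w + β * Real.exp (-(δ * w)) * y w ^ 2 - 2 * β * δ ^ 2 / α * Real.exp (δ * w) - Real.exp (δ * w) / (2 * α) * (β - ρ) * (α * Real.exp (-(2 * δ * w)) * y w ^ 2 - 2 * δ ^ 2)) ^ (ρ + β) * (2 * deriv y w - 2 * δ * y w + β * Real.exp (-(δ * w)) * y w ^ 2 - 2 * β * δ ^ 2 / α * Real.exp (δ * w) - Real.exp (δ * w) / (2 * α) * (β + ρ) * (α * Real.exp (-(2 * δ * w)) * y w ^ 2 - 2 * δ ^ 2)) ^ (ρ - β)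
        = Real.exp ((ρ + β) * Real.log (2 * deriv y w - 2 * δ * y w + β * Real.exp (-(δ * w)) * y w ^ 2 - 2 * β * δ ^ 2 / α * Real.exp (δ * w) - Real.exp (δ * w) / (2 * α) * (β - ρ) * (α * Real.exp (-(2 * δ * w)) * y w ^ 2 - 2 * δ ^ 2)) + (ρ - β) * Real.log (2 * deriv y w - 2 * δ * y w + β * Real.exp (-(δ * w)) * y w ^ 2 - 2 * β * δ ^ 2 / α * Real.exp (δ * w) - Real.exp (δ * w) / (2 * α) * (β + ρ) * (α * Real.exp (-(2 * δ * w)) * y w ^ 2 - 2 * δ ^ 2)) - 2 * ρ * δ * w) := by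
    intro w hw
    rw [Real.rpow_def_of_pos (hpos w hw).1, Real.rpow_def_of_pos (hpos w hw).2,
      ← Real.exp_add, ← Real.exp_add]
    congr 1
    ring
  intro x hx x' hx'
  rw [hval x hx, hval x' hx']
  exact congrArg Real.exp (hconst' x hx x' hx')
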